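/- Let d be an integer that is not a perfect square (i.e., d ≠ z² for every z ∈ ℤ). Then there exist a positive integer m and a natural number r with gcd(m, r) = 1 such that, for every prime p with p ≡ r (mod m), d is not a quadratic residue modulo p, i.e., there is no x ∈ ℤ with x² ≡ d (mod p). -/

import Mathlib

open jacobiSym ZMod

lemma odd_of_dvd' {a b : ℕ} (h : a ∣ b) (hb : Odd b) : Odd a := by
  rcases h with ⟨c, rfl⟩
  rw [Nat.odd_mul] at hb; exact hb.1

lemma coprime_of_modeq_one {c b : ℕ} (h : b ≡ 1 [MOD c]) : Nat.Coprime c b := by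
  have : Nat.gcd c b = Nat.gcd c 1 := by
    rw [Nat.gcd_rec c b, h, ← Nat.gcd_rec]
  simpa using this

/-- CRT construction used in case B. -/
lemma crt8 (c : ℕ) (hcodd : Odd c) (b₀ : ℕ) : ∃ b : ℕ, b % 8 = b₀ % 8 ∧ b ≡ 1 [MOD c] := by
  have hco : Nat.Coprime 8 c := by
    have h2 : Nat.Coprime 2 c := (Nat.Prime.coprime_iff_not_dvd Nat.prime_two).mpr
      (by rw [Nat.odd_iff] at hcodd; omega)
    simpa using h2.pow_left 3
  obtain ⟨b, hb1, hb2⟩ := Nat.chineseRemainder hco b₀ 1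
  exact ⟨b, hb1, hb2⟩

lemma jacobi_pow2_sq {e c b : ℕ} (hbodd : Odd b) (hcop : Nat.Coprime c b) :
    jacobiSym ((2 ^ e * c ^ 2 : ℕ) : ℤ) b = χ₈ b ^ e := by
  have : ((2 ^ e * c ^ 2 : ℕ) : ℤ) = 2 ^ e * (c : ℤ) ^ 2 := by push_cast; ring
  rw [this, jacobiSym.mul_left, jacobiSym.pow_left, jacobiSym.at_two hbodd,
    jacobiSym.sq_one' (by simpa [Int.gcd_natCast_natCast] using hcop), mul_one]

lemma key (d : ℤ) (hd : ∀ z : ℤ, d ≠ z ^ 2) : ∃ b : ℕ, Odd b ∧ jacobiSym d b = -1 := by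
  have hd0 : d ≠ 0 := by simpa using hd 0
  set n := d.natAbs with hn
  have hn0 : n ≠ 0 := Int.natAbs_ne_zero.mpr hd0
  set e := n.factorization 2 with he
  set D := ordCompl[2] n with hD
  have hnD : 2 ^ e * D = n := Nat.ordProj_mul_ordCompl_eq_self n 2
  have hD0 : D ≠ 0 := (Nat.ordCompl_pos 2 hn0).ne'
  have hDodd : Odd D := by
    rw [Nat.odd_iff]
    have := Nat.not_dvd_ordCompl Nat.prime_two hn0
    omega
  obtain ⟨t, c, htc, ht⟩ := Nat.sq_mul_squarefree D
  have hc0 : c ≠ 0 := by rintro rfl; simp at htc; omega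
  have ht0 : t ≠ 0 := by rintro rfl; simp at htc; omega
  have htodd : Odd t := odd_of_dvd' (Dvd.intro_left _ htc) hDodd
  have hcodd : Odd c :=
    odd_of_dvd' (dvd_trans (dvd_pow_self c two_ne_zero) (Dvd.intro _ htc)) hDodd
  by_cases ht1 : t = 1
  · -- Case B : D = c ^ 2
    subst ht1
    rw [mul_one] at htc
    have hnfac : n = 2 ^ e * c ^ 2 := by rw [← hnD, htc]
    rcases Int.natAbs_eq d with hdn | hdn
    · -- d positive
      have heodd : Odd e := by
        rcases Nat.even_or_odd e with hev | hod
        · exfalso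
          obtain ⟨k, hk⟩ := hev
          refine hd ((2 ^ k * c : ℕ) : ℤ) ?_
          rw [hdn, ← hn]
          congr 1
          rw [hnfac, hk]
          push_cast
          ring
        · exact hod
      obtain ⟨b, hb8, hbc⟩ := crt8 c hcodd 5
      have hbodd : Odd b := by rw [Nat.odd_iff]; omega
      refine ⟨b, hbodd, ?_⟩
      rw [hdn, ← hn, hnfac, jacobi_pow2_sq hbodd (coprime_of_modeq_one hbc),
        ZMod.χ₈_nat_mod_eight, hb8]
      have : χ₈ ((5 % 8 : ℕ)) = -1 := by decide
      rw [this, heodd.neg_one_pow]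
    · -- d negative
      rcases Nat.even_or_odd e with hev | hod
      · obtain ⟨b, hb8, hbc⟩ := crt8 c hcodd 3
        have hbodd : Odd b := by rw [Nat.odd_iff]; omega
        refine ⟨b, hbodd, ?_⟩
        rw [hdn, ← hn, hnfac, jacobiSym.neg _ hbodd,
          jacobi_pow2_sq hbodd (coprime_of_modeq_one hbc),
          ZMod.χ₈_nat_mod_eight, hb8, ZMod.χ₄_nat_mod_four]
        have h4 : b % 4 = 3 := by omega
        rw [h4]
        have h1 : χ₈ ((3 % 8 : ℕ)) = -1 := by decide
        have h2 : χ₄ ((3 : ℕ)) = -1 := by decide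
        rw [h1, h2, hev.neg_one_pow]
        norm_num
      · obtain ⟨b, hb8, hbc⟩ := crt8 c hcodd 5
        have hbodd : Odd b := by rw [Nat.odd_iff]; omega
        refine ⟨b, hbodd, ?_⟩
        rw [hdn, ← hn, hnfac, jacobiSym.neg _ hbodd,
          jacobi_pow2_sq hbodd (coprime_of_modeq_one hbc),
          ZMod.χ₈_nat_mod_eight, hb8, ZMod.χ₄_nat_mod_four]
        have h4 : b % 4 = 1 := by omega
        rw [h4]
        have h1 : χ₈ ((5 % 8 : ℕ)) = -1 := by decide
        have h2 : χ₄ ((1 : ℕ)) = 1 := by decide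
        rw [h1, h2, hod.neg_one_pow]
        norm_num
  · -- Case A : there is an odd prime q dividing t
    obtain ⟨q, hq, hqt⟩ := Nat.exists_prime_and_dvd ht1
    haveI : Fact q.Prime := ⟨hq⟩
    have hq2 : q ≠ 2 := by
      rintro rfl
      rw [Nat.odd_iff] at htodd
      omega
    have hqodd : Odd q := hq.odd_of_ne_two hq2
    obtain ⟨w, htw⟩ := hqt
    have hw0 : w ≠ 0 := by rintro rfl; simp at htw; exact ht0 htw
    have hwodd : Odd w := odd_of_dvd' (Dvd.intro_left _ htw.symm) htodd
    have hqw : ¬ q ∣ w := by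
      intro hdvd
      obtain ⟨v, rfl⟩ := hdvd
      have : q * q ∣ t := ⟨v, by rw [htw]; ring⟩
      exact hq.not_isUnit (ht q this)
    -- q-free part of c
    set k := c.factorization q with hk
    set c' := ordCompl[q] c with hc'
    have hcc' : q ^ k * c' = c := Nat.ordProj_mul_ordCompl_eq_self c q
    have hc'0 : c' ≠ 0 := (Nat.ordCompl_pos q hc0).ne'
    have hc'odd : Odd c' := odd_of_dvd' (Nat.ordCompl_dvd c q) hcodd
    have hqc' : ¬ q ∣ c' := Nat.not_dvd_ordCompl hq hc0
    -- nonresidue mod q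
    have hchar : ringChar (ZMod q) ≠ 2 := by
      rw [ZMod.ringChar_zmod_n]; exact hq2
    obtain ⟨u, hu⟩ := FiniteField.exists_nonsquare hchar
    have hu0 : u ≠ 0 := fun h => hu (h ▸ (IsSquare.zero : IsSquare (0 : ZMod q)))
    have hJu : jacobiSym (u.val : ℤ) q = -1 := by
      rw [ZMod.nonsquare_iff_jacobiSym_eq_neg_one]
      intro hsq
      apply hu
      rwa [Int.cast_natCast, ZMod.natCast_rightInverse u] at hsq
    -- CRT
    have hco : Nat.Coprime q (8 * (c' * w)) := by
      have h8 : Nat.Coprime q 8 := by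
        have h2 : Nat.Coprime q 2 := (Nat.Prime.coprime_iff_not_dvd hq).mpr
          (fun h => hq2 ((Nat.prime_dvd_prime_iff_eq hq Nat.prime_two).mp h))
        simpa using h2.pow_right 3
      exact h8.mul_right (((Nat.Prime.coprime_iff_not_dvd hq).mpr hqc').mul_right
        ((Nat.Prime.coprime_iff_not_dvd hq).mpr hqw))
    obtain ⟨b, hbq, hbm⟩ := Nat.chineseRemainder hco u.val 1
    have hb8' : (b : ℕ) ≡ 1 [MOD 8] := Nat.ModEq.of_dvd ⟨c' * w, rfl⟩ hbm
    have hb8 : (b : ℕ) % 8 = 1 := by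
      have := hb8'; unfold Nat.ModEq at this; omega
    have hbodd : Odd (b : ℕ) := by rw [Nat.odd_iff]; omega
    have hb4 : (b : ℕ) % 4 = 1 := by omega
    have hbc' : (b : ℕ) ≡ 1 [MOD c'] := Nat.ModEq.of_dvd ⟨8 * w, by ring⟩ hbm
    have hbw : (b : ℕ) ≡ 1 [MOD w] := Nat.ModEq.of_dvd ⟨8 * c', by ring⟩ hbm
    have hqb : ¬ q ∣ (b : ℕ) := by
      intro hdvd
      obtain ⟨y, hy⟩ := hdvd
      have h1 : (b : ℕ) % q = 0 := by simp [hy, Nat.mul_mod_right]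
      have hbq' : (b : ℕ) % q = u.val % q := hbq
      have h4 : u.val < q := ZMod.val_lt u
      have h3 : u.val = 0 := by rw [← Nat.mod_eq_of_lt h4, ← hbq', h1]
      exact hu0 (by rwa [ZMod.val_eq_zero] at h3)
    have hcb : Nat.Coprime c (b : ℕ) := by
      by_contra hncop
      obtain ⟨r, hr, hrc, hrb⟩ := Nat.Prime.not_coprime_iff_dvd.mp hncop
      by_cases hrq : r = q
      · exact hqb (hrq ▸ hrb)
      · have hrc' : r ∣ c' := by
          have hcop : Nat.Coprime r (q ^ k) := by
            refine Nat.Coprime.pow_right _ ((Nat.Prime.coprime_iff_not_dvd hr).mpr ?_)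
            intro h
            exact hrq ((Nat.prime_dvd_prime_iff_eq hr hq).mp h)
          exact hcop.dvd_of_dvd_mul_left (hcc' ▸ hrc)
        have hcop2 := (coprime_of_modeq_one hbc').coprime_dvd_left hrc'
        exact ((Nat.Prime.coprime_iff_not_dvd hr).mp hcop2) hrb
    refine ⟨b, hbodd, ?_⟩
    have hnfac : (n : ℤ) = 2 ^ e * (c : ℤ) ^ 2 * ((q : ℤ) * (w : ℤ)) := by
      have hnn : n = 2 ^ e * c ^ 2 * (q * w) := by rw [← hnD, ← htc, htw]; ring
      rw [hnn]; push_cast; ring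
    have hJq : jacobiSym (q : ℤ) b = -1 := by
      rw [jacobiSym.quadratic_reciprocity_one_mod_four' hqodd hb4]
      have hmod : ((b : ℤ)) % q = ((u.val : ℤ)) % q := by
        have := congrArg (Nat.cast : ℕ → ℤ) hbq
        push_cast at this
        exact_mod_cast this
      rw [jacobiSym.mod_left' hmod, hJu]
    have hJw : jacobiSym (w : ℤ) b = 1 := by
      rw [jacobiSym.quadratic_reciprocity_one_mod_four' hwodd hb4]
      have hmod : ((b : ℤ)) % w = (1 : ℤ) % w := by
        have := congrArg (Nat.cast : ℕ → ℤ) hbw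
        push_cast at this
        exact_mod_cast this
      rw [jacobiSym.mod_left' hmod, jacobiSym.one_left]
    have hχ8 : χ₈ (b : ℕ) = 1 := by
      rw [ZMod.χ₈_nat_mod_eight, hb8]; decide
    have hgcd : (c : ℤ).gcd b = 1 := by
      simpa [Int.gcd_natCast_natCast] using hcb
    have hJn : jacobiSym (n : ℤ) b = -1 := by
      rw [hnfac, jacobiSym.mul_left, jacobiSym.mul_left, jacobiSym.mul_left,
        jacobiSym.pow_left, jacobiSym.at_two hbodd, hχ8, jacobiSym.sq_one' hgcd,
        hJq, hJw]
      norm_num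
    rcases Int.natAbs_eq d with hdn | hdn
    · rw [hdn, ← hn, hJn]
    · rw [hdn, ← hn, jacobiSym.neg _ hbodd, hJn, ZMod.χ₄_nat_one_mod_four hb4]
      norm_num

/-- If d is an integer that is not a perfect square, then there are m ∈ ℕ⁺ and
r ∈ ℕ with gcd(m, r) = 1 such that d is not a quadratic residue modulo any
prime p ≡ r (mod m). -/
theorem exists_progression_of_non_quadratic_residue (d : ℤ)
    (hd : ∀ z : ℤ, d ≠ z ^ 2) :
    ∃ (m : ℕ) (r : ℕ), 0 < m ∧ Nat.gcd m r = 1 ∧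
      ∀ p : ℕ, p.Prime → p ≡ r [MOD m] → ¬ ∃ x : ℤ, x ^ 2 ≡ d [ZMOD (p : ℤ)] := by
  have hd0 : d ≠ 0 := by simpa using hd 0
  obtain ⟨b, hbodd, hbJ⟩ := key d hd
  have hb0 : b ≠ 0 := by rintro rfl; simp [jacobiSym.zero_right] at hbJ
  have hna : d.natAbs ≠ 0 := Int.natAbs_ne_zero.mpr hd0
  refine ⟨4 * d.natAbs, b % (4 * d.natAbs), by positivity, ?_, ?_⟩
  · -- gcd
    have hcop : Nat.Coprime b (4 * d.natAbs) := by
      have h2 : Nat.Coprime b 4 := by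
        have : Nat.Coprime b 2 :=
          Nat.coprime_comm.mp ((Nat.Prime.coprime_iff_not_dvd Nat.prime_two).mpr
            (by rw [Nat.odd_iff] at hbodd; omega))
        simpa using this.pow_right 2
      have hn : Nat.Coprime b d.natAbs := by
        have h := jacobiSym.eq_zero_iff (a := d) (b := b)
        have : ¬ (b ≠ 0 ∧ d.gcd b ≠ 1) := fun hc => by
          rw [← h] at hc; rw [hbJ] at hc; norm_num at hc
        push_neg at this
        have hg := this hb0
        rw [Int.gcd] at hg
        exact (Nat.coprime_comm.mp hg)
      exact Nat.Coprime.mul_right h2 hn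
    rw [Nat.gcd_comm, ← Nat.gcd_rec]
    exact hcop.symm
  · intro p hp hpr ⟨x, hx⟩
    have hmodeq : p ≡ b [MOD 4 * d.natAbs] := hpr.trans (Nat.mod_modEq b _)
    have hpodd : Odd p := by
      have h2 : p % 2 = b % 2 := (Nat.ModEq.of_dvd ⟨2 * d.natAbs, by ring⟩ hmodeq)
      rw [Nat.odd_iff] at hbodd ⊢; rw [h2]; exact hbodd
    have hJp : jacobiSym d p = -1 := by
      rw [jacobiSym.mod_right d hpodd, hmodeq, ← jacobiSym.mod_right d hbodd, hbJ]
    have hns := ZMod.nonsquare_of_jacobiSym_eq_neg_one hJp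
    apply hns
    have : ((x ^ 2 : ℤ) : ZMod p) = (d : ZMod p) := by
      rw [ZMod.intCast_eq_intCast_iff]
      exact_mod_cast hx
    rw [← this]
    push_cast
    exact ⟨(x : ZMod p), by ring⟩
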